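/- Let 0 < r_i < r_h, set q = r_i r_h, M = (r_i + r_h)/2, f(r) = (r − r_i)(r − r_h)/r² (equivalently f(r) = 1 − 2M/r + q/r²), and U(r) = 2/r² + 4q/r⁴. Suppose A : (r_h, ∞) → ℝ is differentiable, the function r ↦ f(r)A'(r) is differentiable with (d/dr)(f(r)A'(r)) = U(r) A(r) for all r > r_h, and suppose A(r) → α and f(r)A'(r) → 0 as r → r_h⁺, where α > 0. Then A(r) → ∞ as r → ∞; in particular A is unbounded on (r_h, ∞). -/

import Mathlib

open Set Filter


/-- Stationary solutions of the homogeneous `ℓ = 1` odd-sector equation on an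
asymptotically flat Reissner–Nordström background which are regular at the event
horizon (finite limit `α > 0` of `A` and vanishing limit of `fA'` at `r_h`) diverge
as `r → ∞`; in particular they are unbounded on the outer static region. -/
theorem stmt_13 (r_i r_h : ℝ) (h0 : 0 < r_i) (hih : r_i < r_h)
    (q M : ℝ) (hq : q = r_i * r_h) (hM : M = (r_i + r_h) / 2)
    (f U : ℝ → ℝ)
    (hf : ∀ r : ℝ, f r = (r - r_i) * (r - r_h) / r ^ 2)
    (hU : ∀ r : ℝ, U r = 2 / r ^ 2 + 4 * q / r ^ 4)
    (A A' : ℝ → ℝ)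
    (hA : ∀ r ∈ Set.Ioi r_h, HasDerivAt A (A' r) r)
    (hfA : ∀ r ∈ Set.Ioi r_h, HasDerivAt (fun x => f x * A' x) (U r * A r) r)
    (α : ℝ) (hα : 0 < α)
    (hlimA : Filter.Tendsto A (nhdsWithin r_h (Set.Ioi r_h)) (nhds α))
    (hlimfA : Filter.Tendsto (fun r => f r * A' r) (nhdsWithin r_h (Set.Ioi r_h)) (nhds 0)) :
    Filter.Tendsto A Filter.atTop Filter.atTop ∧ ¬ BddAbove (A '' Set.Ioi r_h) := by
  have hrh0 : 0 < r_h := h0.trans hih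
  have hqpos : 0 < q := by rw [hq]; exact mul_pos h0 hrh0
  set B : ℝ → ℝ := fun x => f x * A' x with hBdef
  have hfpos : ∀ r, r_h < r → 0 < f r := by
    intro r hr; rw [hf]
    have hr0 : 0 < r := hrh0.trans hr
    have h1 : 0 < r - r_i := by linarith
    have h2 : 0 < r - r_h := by linarith
    positivity
  have hfle1 : ∀ r, r_h < r → f r ≤ 1 := by
    intro r hr; rw [hf]
    have hr0 : 0 < r := hrh0.trans hr
    rw [div_le_one (by positivity)]
    nlinarith
  have hUpos : ∀ r, r_h < r → 0 < U r := by
    intro r hr; rw [hU]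
    have hr0 : 0 < r := hrh0.trans hr
    positivity
  have hA'eq : ∀ r, r_h < r → A' r = B r / f r := by
    intro r hr
    rw [hBdef, eq_comm, div_eq_iff (hfpos r hr).ne', mul_comm]
  -- continuity facts
  have hcontA : ∀ {s : Set ℝ}, s ⊆ Ioi r_h → ContinuousOn A s := fun hs =>
    fun x hx => ((hA x (hs hx)).continuousAt).continuousWithinAt
  have hcontB : ∀ {s : Set ℝ}, s ⊆ Ioi r_h → ContinuousOn B s := fun hs =>
    fun x hx => ((hfA x (hs hx)).continuousAt).continuousWithinAt
  have hderivB : ∀ r, r_h < r → deriv B r = U r * A r := fun r hr => (hfA r hr).deriv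
  have hderivA : ∀ r, r_h < r → deriv A r = A' r := fun r hr => (hA r hr).deriv
  -- B is nonneg near the horizon, given strict monotonicity on a bigger interval
  -- key positivity bootstrap
  have keyA : ∀ r ∈ Ioi r_h, α / 2 < A r := by
    by_contra hcon
    push_neg at hcon
    obtain ⟨r1, hr1, hAr1⟩ := hcon
    have hev : {s | α / 2 < A s} ∈ nhdsWithin r_h (Ioi r_h) :=
      hlimA.eventually (eventually_gt_nhds (by linarith))
    obtain ⟨u, hu, husub⟩ := mem_nhdsGT_iff_exists_Ioo_subset.1 hev
    have hur1 : u ≤ r1 := by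
      by_contra hh
      push_neg at hh
      have := husub ⟨hr1, hh⟩
      simp only [Set.mem_setOf_eq] at this
      linarith
    set a : ℝ := (r_h + u) / 2 with ha
    have hrha : r_h < a := by simp only [ha]; rw [mem_Ioi] at hu; linarith
    have hau : a < u := by simp only [ha]; rw [mem_Ioi] at hu; linarith
    have har1 : a ≤ r1 := le_trans hau.le hur1
    set T : Set ℝ := Icc a r1 ∩ A ⁻¹' (Iic (α / 2)) with hT
    have hTclosed : IsClosed T :=
      (hcontA (fun x hx => lt_of_lt_of_le hrha hx.1)).preimage_isClosed_of_isClosed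
        isClosed_Icc isClosed_Iic
    have hTne : T.Nonempty := ⟨r1, ⟨har1, le_refl r1⟩, hAr1⟩
    have hTbdd : BddBelow T := ⟨a, fun x hx => hx.1.1⟩
    set c : ℝ := sInf T with hc
    have hcT : c ∈ T := hTclosed.csInf_mem hTne hTbdd
    have hac : a ≤ c := hcT.1.1
    have hrhc : r_h < c := lt_of_lt_of_le hrha hac
    have hcr1 : c ≤ r1 := hcT.1.2
    have hAc : A c ≤ α / 2 := hcT.2
    -- A > α/2 on Ioo r_h c
    have hlt : ∀ s ∈ Ioo r_h c, α / 2 < A s := by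
      rintro s ⟨hs1, hs2⟩
      rcases lt_or_ge s a with hsa | hsa
      · exact husub ⟨hs1, hsa.trans hau⟩
      · by_contra hh
        push_neg at hh
        have : s ∈ T := ⟨⟨hsa, hs2.le.trans hcr1⟩, hh⟩
        exact absurd (csInf_le hTbdd this) (not_le.2 hs2)
    have hsub : Ioc r_h c ⊆ Ioi r_h := fun x hx => hx.1
    -- B strictly monotone on Ioc r_h c
    have hBmono : StrictMonoOn B (Ioc r_h c) := by
      apply strictMonoOn_of_deriv_pos (convex_Ioc _ _) (hcontB hsub)
      intro x hx
      rw [interior_Ioc] at hx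
      rw [hderivB x hx.1]
      exact mul_pos (hUpos x hx.1) (lt_trans (by linarith) (hlt x hx))
    -- B positive on Ioo r_h c (and at points of Ioc)
    have hBpos : ∀ x ∈ Ioc r_h c, 0 < B x := by
      rintro x ⟨hx1, hx2⟩
      set s0 : ℝ := (r_h + x) / 2 with hs0
      have hs01 : r_h < s0 := by simp only [hs0]; linarith
      have hs02 : s0 < x := by simp only [hs0]; linarith
      have hBs0 : 0 ≤ B s0 := by
        apply le_of_tendsto hlimfA
        have h1 : ∀ᶠ s in nhdsWithin r_h (Ioi r_h), s < s0 :=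
          eventually_nhdsWithin_of_eventually_nhds (eventually_lt_nhds hs01)
        filter_upwards [h1, self_mem_nhdsWithin] with s hss0 hsIoi
        exact (hBmono ⟨hsIoi, by linarith⟩ ⟨hs01, by linarith⟩ hss0).le
      exact lt_of_le_of_lt hBs0 (hBmono ⟨hs01, by linarith⟩ ⟨hx1, hx2⟩ hs02)
    -- A strictly monotone on Ioc r_h c
    have hAmono : StrictMonoOn A (Ioc r_h c) := by
      apply strictMonoOn_of_deriv_pos (convex_Ioc _ _) (hcontA hsub)
      intro x hx
      rw [interior_Ioc] at hx
      rw [hderivA x hx.1, hA'eq x hx.1]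
      exact div_pos (hBpos x ⟨hx.1, hx.2.le⟩) (hfpos x hx.1)
    -- α ≤ A c
    have : α ≤ A c := by
      apply le_of_tendsto hlimA
      have h1 : ∀ᶠ s in nhdsWithin r_h (Ioi r_h), s < c :=
        eventually_nhdsWithin_of_eventually_nhds (eventually_lt_nhds hrhc)
      filter_upwards [h1, self_mem_nhdsWithin] with s hsc hsIoi
      exact (hAmono ⟨hsIoi, by linarith⟩ ⟨hrhc, le_refl c⟩ hsc).le
    linarith
  -- global strict monotonicity of B
  have hBmono : StrictMonoOn B (Ioi r_h) := by
    apply strictMonoOn_of_deriv_pos (convex_Ioi _) (hcontB (le_refl _))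
    intro x hx
    rw [interior_Ioi] at hx
    rw [hderivB x hx]
    exact mul_pos (hUpos x hx) (lt_trans (by linarith) (keyA x hx))
  have hBpos : ∀ x ∈ Ioi r_h, 0 < B x := by
    intro x hx
    rw [mem_Ioi] at hx
    set s0 : ℝ := (r_h + x) / 2 with hs0
    have hs01 : r_h < s0 := by simp only [hs0]; linarith
    have hs02 : s0 < x := by simp only [hs0]; linarith
    have hBs0 : 0 ≤ B s0 := by
      apply le_of_tendsto hlimfA
      have h1 : ∀ᶠ s in nhdsWithin r_h (Ioi r_h), s < s0 :=
        eventually_nhdsWithin_of_eventually_nhds (eventually_lt_nhds hs01)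
      filter_upwards [h1, self_mem_nhdsWithin] with s hss0 hsIoi
      exact (hBmono hsIoi (mem_Ioi.2 hs01) hss0).le
    exact lt_of_le_of_lt hBs0 (hBmono (mem_Ioi.2 hs01) (mem_Ioi.2 hx) hs02)
  -- linear growth
  set r0 : ℝ := r_h + 1 with hr0def
  have hr0 : r_h < r0 := by simp only [hr0def]; linarith
  set b : ℝ := B r0 with hbdef
  have hb : 0 < b := hBpos r0 hr0
  have hA'ge : ∀ r, r0 < r → b ≤ A' r := by
    intro r hr
    have hrh : r_h < r := hr0.trans hr
    have h1 : b < B r := hBmono hr0 hrh hr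
    have h2 : B r ≤ B r / f r := by
      rw [le_div_iff₀ (hfpos r hrh)]
      exact mul_le_of_le_one_right (hBpos r hrh).le (hfle1 r hrh)
    rw [hA'eq r hrh]
    linarith
  set g : ℝ → ℝ := fun r => A r - b * r with hg
  have hgmono : MonotoneOn g (Ici r0) := by
    have hsub : Ici r0 ⊆ Ioi r_h := fun x hx => lt_of_lt_of_le hr0 hx
    have hgd : ∀ r ∈ Ioi r_h, HasDerivAt g (A' r - b) r := by
      intro r hr
      have hb' : HasDerivAt (fun y : ℝ => b * y) b r := by
        simpa using (hasDerivAt_id r).const_mul b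
      exact (hA r hr).sub hb'
    apply monotoneOn_of_deriv_nonneg (convex_Ici _)
    · exact fun x hx => ((hgd x (hsub hx)).continuousAt).continuousWithinAt
    · rw [interior_Ici]
      intro x hx
      exact ((hgd x (hsub (mem_Ici.2 (le_of_lt hx)))).differentiableAt).differentiableWithinAt
    · rw [interior_Ici]
      intro x hx
      rw [(hgd x (hsub (mem_Ici.2 (le_of_lt hx)))).deriv]
      have := hA'ge x hx
      linarith
  have hlin : ∀ r, r0 ≤ r → A r0 - b * r0 + b * r ≤ A r := by
    intro r hr
    have := hgmono (self_mem_Ici) hr hr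
    simp only [hg] at this
    linarith
  have htend : Tendsto A atTop atTop := by
    apply tendsto_atTop_mono' atTop _
      (tendsto_atTop_add_const_left atTop (A r0 - b * r0)
        (Tendsto.const_mul_atTop hb tendsto_id))
    filter_upwards [eventually_ge_atTop r0] with r hr
    exact hlin r hr
  refine ⟨htend, ?_⟩
  rintro ⟨m, hm⟩
  obtain ⟨r, hrm, hrh⟩ :=
    ((htend.eventually (eventually_gt_atTop m)).and (eventually_gt_atTop r_h)).exists
  exact absurd (hm ⟨r, hrh, rfl⟩) (not_le.2 hrm)
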